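/- Let g(x,z) = z - (a₁²x₁² + ⋯ + aₙ²xₙ²) with aᵢ > 0. For every k ∈ ℝ and every p on the elliptic paraboloid M_k = g⁻¹(k), K(p)|∇g(p)|^{n+2} = 2ⁿ a₁² a₂² ⋯ aₙ², a constant independent of both p and k. -/

import Mathlib

open Finset Real

/-- Partial derivative in the `i`-th coordinate direction. -/
noncomputable def pderiv' {n : ℕ} (i : Fin n) (g : EuclideanSpace ℝ (Fin n) → ℝ)
    (x : EuclideanSpace ℝ (Fin n)) : ℝ :=
  fderiv ℝ g x (EuclideanSpace.single i 1)

/-- The Hessian matrix of second partial derivatives. -/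
noncomputable def hessianMatrix {n : ℕ} (f : EuclideanSpace ℝ (Fin n) → ℝ)
    (x : EuclideanSpace ℝ (Fin n)) : Matrix (Fin n) (Fin n) ℝ :=
  fun i j => pderiv' i (pderiv' j f) x

lemma proj_hasFDerivAt {n : ℕ} (i : Fin n) (x : EuclideanSpace ℝ (Fin n)) :
    HasFDerivAt (fun x : EuclideanSpace ℝ (Fin n) => x i)
      (EuclideanSpace.proj i : EuclideanSpace ℝ (Fin n) →L[ℝ] ℝ) x := by
  have h := (EuclideanSpace.proj i : EuclideanSpace ℝ (Fin n) →L[ℝ] ℝ).hasFDerivAt (x := x)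
  have he : (fun x : EuclideanSpace ℝ (Fin n) => x i) =
      ⇑(EuclideanSpace.proj i : EuclideanSpace ℝ (Fin n) →L[ℝ] ℝ) := by
    funext y; simp
  rw [he]
  exact h

lemma paraboloid_hasFDerivAt {n : ℕ} (c : Fin n → ℝ) (k : ℝ)
    (x : EuclideanSpace ℝ (Fin n)) :
    HasFDerivAt (fun x : EuclideanSpace ℝ (Fin n) => (∑ i, c i * (x i) ^ 2) + k)
      (∑ i, (2 * c i * x i) • (EuclideanSpace.proj i : EuclideanSpace ℝ (Fin n) →L[ℝ] ℝ)) x := by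
  apply HasFDerivAt.add_const
  apply HasFDerivAt.fun_sum
  intro i _
  have h := proj_hasFDerivAt i x
  have h2 := (h.mul h).const_mul (c i)
  convert h2 using 1
  · ext y; ring
  · ext y; simp; ring_nf; simp
  · ext y; simp; ring_nf

/-- For the elliptic paraboloid `M_k : z = Σaᵢ²xᵢ² + k`, the Gauss–Kronecker curvature
satisfies `K(p)|∇g(p)|^{n+2} = 2ⁿ a₁²⋯aₙ²`, independently of `p` and `k`. -/
theorem stmt12 (n : ℕ) (a : Fin n → ℝ) (ha : ∀ i, 0 < a i) (k : ℝ)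
    (f : EuclideanSpace ℝ (Fin n) → ℝ)
    (hf : ∀ x, f x = (∑ i, (a i) ^ 2 * (x i) ^ 2) + k) :
    ∀ x,
      ((hessianMatrix f x).det / (1 + ‖gradient f x‖ ^ 2) ^ (((n : ℝ) + 2) / 2)) *
        (Real.sqrt (1 + ‖gradient f x‖ ^ 2)) ^ (n + 2) =
      2 ^ n * ∏ i, (a i) ^ 2 := by
  intro x
  obtain rfl : f = fun x => (∑ i, (a i) ^ 2 * (x i) ^ 2) + k := funext hf
  -- first partials
  have hp1 : ∀ (j : Fin n), pderiv' j (fun x : EuclideanSpace ℝ (Fin n) =>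
      (∑ i, (a i) ^ 2 * (x i) ^ 2) + k) = fun x => 2 * (a j) ^ 2 * x j := by
    intro j
    funext y
    unfold pderiv'
    rw [(paraboloid_hasFDerivAt (fun i => (a i)^2) k y).fderiv]
    simp [EuclideanSpace.single_apply, mul_comm]
  -- second partials
  have hp2 : hessianMatrix (fun x : EuclideanSpace ℝ (Fin n) =>
      (∑ i, (a i) ^ 2 * (x i) ^ 2) + k) x = Matrix.diagonal (fun i => 2 * (a i) ^ 2) := by
    funext i j
    unfold hessianMatrix
    rw [hp1 j]
    unfold pderiv'
    have h : HasFDerivAt (fun y : EuclideanSpace ℝ (Fin n) => 2 * (a j) ^ 2 * y j)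
        ((2 * (a j) ^ 2) • (EuclideanSpace.proj j : EuclideanSpace ℝ (Fin n) →L[ℝ] ℝ)) x :=
      (proj_hasFDerivAt j x).const_mul _
    rw [h.fderiv]
    simp [Matrix.diagonal, EuclideanSpace.single_apply]
    by_cases hij : i = j
    · subst hij; simp
    · simp [hij, Ne.symm hij]
  rw [hp2, Matrix.det_diagonal]
  have hdet : ∏ i, (2 * (a i) ^ 2) = 2 ^ n * ∏ i, (a i) ^ 2 := by
    rw [Finset.prod_mul_distrib]; simp
  rw [hdet]
  set s := ‖gradient (fun x : EuclideanSpace ℝ (Fin n) =>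
      (∑ i, (a i) ^ 2 * (x i) ^ 2) + k) x‖ ^ 2 with hs
  have hs0 : (0:ℝ) ≤ s := by positivity
  have h1s : (0:ℝ) < 1 + s := by linarith
  have hpow : (Real.sqrt (1 + s)) ^ (n + 2) = (1 + s) ^ (((n : ℝ) + 2) / 2) := by
    rw [Real.sqrt_eq_rpow, ← Real.rpow_natCast ((1+s) ^ ((1:ℝ)/2)) (n+2),
      ← Real.rpow_mul h1s.le]
    congr 1
    push_cast
    ring
  rw [hpow, div_mul_cancel₀]
  exact (Real.rpow_pos_of_pos h1s _).ne'
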